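/- Let N_k = 3^k + 1. For every integer k ≥ 1, the set X(1, N_k) of 3-adic digit sequences of elements of C(1, N_k) equals the k-interleaving of the digit-sequence set of C(1, 4): X(1, N_k) = X(1, 4)^{(*k)} as subsets of {0,1,2}^ℕ. -/

import Mathlib

open MeasureTheory ENNReal

noncomputable section

/-- The 3-adic Cantor set: 3-adic integers whose 3-adic expansion uses only digits 0 and 1. -/
def Sigma3 : Set ℤ_[3] :=
  {x | ∃ a : ℕ → ℕ, (∀ i, a i ≤ 1) ∧ x = ∑' i, (a i : ℤ_[3]) * 3 ^ i}

/-- `C1 M = C(1, M) = {x : x ∈ Σ and M·x ∈ Σ}`. -/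
def C1 (M : ℕ) : Set ℤ_[3] :=
  {x | x ∈ Sigma3 ∧ (M : ℤ_[3]) * x ∈ Sigma3}

/-- `X1 M = X(1, M)`: the set of 3-adic digit sequences (valued in {0,1,2}) of
elements of C(1, M). -/
def X1 (M : ℕ) : Set (ℕ → Fin 3) :=
  {a | (∑' i, ((a i : ℕ) : ℤ_[3]) * 3 ^ i) ∈ C1 M}

/-- The n-interleaving of a set of sequences. -/
def Interleave {A : Type*} (n : ℕ) (X : Set (ℕ → A)) : Set (ℕ → A) :=
  {x | ∀ j < n, (fun i => x (j + i * n)) ∈ X}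

namespace X1Aux

lemma norm_three : ‖(3 : ℤ_[3])‖ = (3 : ℝ)⁻¹ := by
  have := PadicInt.norm_p (p := 3)
  simpa using this

lemma tsum_mul_left' (c : ℤ_[3]) (f : ℕ → ℤ_[3]) (hf : Summable f) :
    ∑' i, c * f i = c * ∑' i, f i :=
  (hf.hasSum.mul_left c).tsum_eq

lemma summable_digits (a : ℕ → ℕ) : Summable (fun i => (a i : ℤ_[3]) * 3 ^ i) := by
  apply Summable.of_norm_bounded (g := fun i => (3 : ℝ)⁻¹ ^ i)
    (summable_geometric_of_lt_one (by norm_num) (by norm_num))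
  intro i
  calc ‖(a i : ℤ_[3]) * 3 ^ i‖ ≤ ‖(a i : ℤ_[3])‖ * ‖(3 : ℤ_[3]) ^ i‖ := norm_mul_le _ _
    _ ≤ 1 * ‖(3 : ℤ_[3]) ^ i‖ := by
        gcongr; exact PadicInt.norm_le_one _
    _ = (3 : ℝ)⁻¹ ^ i := by
        rw [one_mul, norm_pow, norm_three]

/-- Tail factorization: `∑' i, a (i+m) * 3^(i+m) = 3^m * ∑' i, a (i+m) * 3^i`. -/
lemma tail_eq (a : ℕ → ℕ) (m : ℕ) :
    ∑' i, ((a (i + m) : ℤ_[3]) * 3 ^ (i + m))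
      = 3 ^ m * ∑' i, ((a (i + m) : ℤ_[3]) * 3 ^ i) := by
  have h1 : ∀ i : ℕ, ((a (i + m) : ℤ_[3]) * 3 ^ (i + m))
      = (3 : ℤ_[3]) ^ m * ((a (i + m) : ℤ_[3]) * 3 ^ i) := fun i => by ring
  exact (tsum_congr h1).trans (tsum_mul_left' _ _ (summable_digits fun i => a (i + m)))

/-- Uniqueness of digit expansions with digits ≤ 2. -/
lemma digits_unique (a b : ℕ → ℕ) (ha : ∀ i, a i ≤ 2) (hb : ∀ i, b i ≤ 2)
    (h : ∑' i, (a i : ℤ_[3]) * 3 ^ i = ∑' i, (b i : ℤ_[3]) * 3 ^ i) : ∀ n, a n = b n := by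
  intro n
  induction n using Nat.strong_induction_on with
  | _ n ih =>
    have hsa := Summable.sum_add_tsum_nat_add (f := fun i => (a i : ℤ_[3]) * 3 ^ i) (n+1)
      (summable_digits a)
    have hsb := Summable.sum_add_tsum_nat_add (f := fun i => (b i : ℤ_[3]) * 3 ^ i) (n+1)
      (summable_digits b)
    rw [← hsa, ← hsb] at h
    rw [Finset.sum_range_succ, Finset.sum_range_succ] at h
    have hpre : ∑ i ∈ Finset.range n, (a i : ℤ_[3]) * 3 ^ i
        = ∑ i ∈ Finset.range n, (b i : ℤ_[3]) * 3 ^ i := by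
      refine Finset.sum_congr rfl fun i hi => ?_
      rw [ih i (Finset.mem_range.mp hi)]
    rw [hpre, tail_eq a (n+1), tail_eq b (n+1)] at h
    set s := ∑' i, ((a (i + (n+1)) : ℤ_[3]) * 3 ^ i)
    set t := ∑' i, ((b (i + (n+1)) : ℤ_[3]) * 3 ^ i)
    have key : (a n : ℤ_[3]) - (b n : ℤ_[3]) = 3 * (t - s) := by
      have h3 : (3 : ℤ_[3]) ^ n ≠ 0 := pow_ne_zero _ (by norm_num)
      apply mul_left_cancel₀ h3
      have : (3 : ℤ_[3]) ^ (n+1) = 3 ^ n * 3 := by ring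
      rw [this] at h
      linear_combination h
    have hz : ((a n : ZMod 3)) = ((b n : ZMod 3)) := by
      have := congrArg (PadicInt.toZMod (p := 3)) key
      have h30 : (PadicInt.toZMod (p := 3)) (3 : ℤ_[3]) = 0 := by
        have : ((3 : ℕ) : ℤ_[3]) = (3 : ℤ_[3]) := by norm_cast
        rw [← this, map_natCast]
        exact ZMod.natCast_self 3
      rw [map_sub, map_mul, h30, zero_mul, sub_eq_zero, map_natCast, map_natCast] at this
      exact this
    have := (ZMod.natCast_eq_natCast_iff _ _ _).mp hz
    have han := ha n
    have hbn := hb n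
    unfold Nat.ModEq at this
    omega

/-- Membership in `Sigma3` for a sum with digits ≤ 2. -/
lemma mem_Sigma3_iff (a : ℕ → ℕ) (ha : ∀ i, a i ≤ 2) :
    (∑' i, (a i : ℤ_[3]) * 3 ^ i) ∈ Sigma3 ↔ ∀ i, a i ≤ 1 := by
  constructor
  · rintro ⟨b, hb1, heq⟩ i
    have hb2 : ∀ i, b i ≤ 2 := fun i => (hb1 i).trans one_le_two
    rw [digits_unique a b ha hb2 heq i]
    exact hb1 i
  · intro h
    exact ⟨a, h, rfl⟩

/-- Multiplication by `3^k + 1` at digit level (no carries needed as an identity of sums). -/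
lemma mul_shift (k : ℕ) (a : ℕ → ℕ) :
    ((3 : ℤ_[3]) ^ k + 1) * ∑' i, (a i : ℤ_[3]) * 3 ^ i
      = ∑' i, (((a i + (if k ≤ i then a (i - k) else 0) : ℕ) : ℤ_[3]) * 3 ^ i) := by
  set a' : ℕ → ℕ := fun i => if k ≤ i then a (i - k) else 0 with ha'
  have h1 : ∑' i, ((a' i : ℤ_[3]) * 3 ^ i) = (3 : ℤ_[3]) ^ k * ∑' i, ((a i : ℤ_[3]) * 3 ^ i) := by
    rw [← Summable.sum_add_tsum_nat_add (f := fun i => (a' i : ℤ_[3]) * 3 ^ i) k (summable_digits a')]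
    have hz : ∑ i ∈ Finset.range k, ((a' i : ℤ_[3]) * 3 ^ i) = 0 := by
      apply Finset.sum_eq_zero
      intro i hi
      have hz0 : a' i = 0 := by
        simp only [ha']
        exact if_neg (Nat.not_le.mpr (Finset.mem_range.mp hi))
      rw [hz0]; simp
    rw [hz, zero_add]
    have : ∀ i : ℕ, (a' (i + k) : ℤ_[3]) * 3 ^ (i + k) = 3 ^ k * ((a i : ℤ_[3]) * 3 ^ i) := by
      intro i
      have : a' (i + k) = a i := by simp [ha']
      rw [this]; ring
    exact (tsum_congr this).trans (tsum_mul_left' _ _ (summable_digits a))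
  have h2 : ∀ i : ℕ, (((a i + a' i : ℕ) : ℤ_[3]) * 3 ^ i)
      = (a' i : ℤ_[3]) * 3 ^ i + (a i : ℤ_[3]) * 3 ^ i := by
    intro i; push_cast; ring
  rw [tsum_congr h2, Summable.tsum_add (summable_digits a') (summable_digits a), h1]
  ring

/-- Characterization of membership in `X1 (3^k + 1)`. -/
lemma mem_X1_iff (k : ℕ) (a : ℕ → Fin 3) :
    a ∈ X1 (3 ^ k + 1) ↔
      ∀ n, (a n : ℕ) + (if k ≤ n then (a (n - k) : ℕ) else 0) ≤ 1 := by
  set A : ℕ → ℕ := fun i => (a i : ℕ) with hA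
  have hA2 : ∀ i, A i ≤ 2 := fun i => Nat.lt_succ_iff.mp (a i).isLt
  set c : ℕ → ℕ := fun n => A n + (if k ≤ n then A (n - k) else 0) with hc
  have hcast : ((3 ^ k + 1 : ℕ) : ℤ_[3]) = (3 : ℤ_[3]) ^ k + 1 := by push_cast; ring
  have hmul : ((3 ^ k + 1 : ℕ) : ℤ_[3]) * ∑' i, (A i : ℤ_[3]) * 3 ^ i
      = ∑' i, (c i : ℤ_[3]) * 3 ^ i := by
    rw [hcast, mul_shift]
  constructor
  · rintro ⟨hx, hMx⟩ n
    have h1 : ∀ i, A i ≤ 1 := (mem_Sigma3_iff A hA2).mp hx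
    have hc2 : ∀ i, c i ≤ 2 := fun i => by
      simp only [hc]
      have := h1 i
      split <;> [skip; omega]
      have := h1 (i - k); omega
    rw [hmul] at hMx
    exact (mem_Sigma3_iff c hc2).mp hMx n
  · intro h
    have h1 : ∀ i, A i ≤ 1 := fun i => le_trans (Nat.le_add_right _ _) (h i)
    have hc2 : ∀ i, c i ≤ 2 := fun i => le_trans (h i) one_le_two
    exact ⟨(mem_Sigma3_iff A hA2).mpr h1, by rw [hmul]; exact (mem_Sigma3_iff c hc2).mpr h⟩

/-- Index bookkeeping for the interleaving. -/
lemma shift_index (k j i : ℕ) (hj : j < k) (A : ℕ → ℕ) :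
    A (j + i * k) + (if k ≤ j + i * k then A (j + i * k - k) else 0)
      = A (j + i * k) + (if 1 ≤ i then A (j + (i - 1) * k) else 0) := by
  match i with
  | 0 => rw [if_neg (by omega), if_neg (by omega)]
  | i + 1 =>
    have he : (i + 1) * k = i * k + k := by ring
    have he' : i * k = (i + 1 - 1) * k := by norm_num
    rw [if_pos (by omega), if_pos (by omega)]
    have hidx : j + (i + 1) * k - k = j + (i + 1 - 1) * k := by omega
    rw [hidx]

end X1Aux

/-- For every k ≥ 1, X(1, N_k) = X(1, 4)^{(*k)}, where N_k = 3^k + 1. -/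
theorem X1_Nk_eq_interleave (k : ℕ) (hk : 1 ≤ k) :
    X1 (3 ^ k + 1) = Interleave k (X1 4) := by
  ext a
  rw [X1Aux.mem_X1_iff k a]
  have h4 : (4 : ℕ) = 3 ^ 1 + 1 := by norm_num
  have hk0 : 0 < k := hk
  constructor
  · intro h j hj
    rw [h4, X1Aux.mem_X1_iff]
    intro i
    have hn := h (j + i * k)
    rw [X1Aux.shift_index k j i hj (fun m => (a m : ℕ))] at hn
    simpa using hn
  · intro h n
    obtain ⟨i, j, hjk, rfl⟩ : ∃ i j, j < k ∧ n = j + i * k :=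
      ⟨n / k, n % k, Nat.mod_lt _ hk0, (Nat.mod_add_div' n k).symm⟩
    have hmem := h j hjk
    rw [h4, X1Aux.mem_X1_iff] at hmem
    have hi := hmem i
    rw [X1Aux.shift_index k j i hjk (fun m => (a m : ℕ))]
    simpa using hi

end
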